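/- Fix an integer d_r ≥ 2. There exist constants c > 0 and 0 < ε₀ < 1 (depending only on d_r) such that for every 0 < ε < ε₀, every rational neural network R : [−1, 1] → ℝ with M layers, layer widths k_1, …, k_M, and activation functions that are rational functions of degree at most d_r, satisfying max_{x ∈ [−1,1]} |R(x) − ReLU(x)| ≤ ε, must have size k_1 + ⋯ + k_M ≥ c·log(log(1/ε)). -/

import Mathlib

open Real Set

/-- ReLU activation. -/
def ReLU (x : ℝ) : ℝ := max x 0

/-- `f` is a rational function of type `(p, q)` on the set `I`:
`f = P/Q` with `deg P ≤ p`, `deg Q ≤ q` and `Q` has no zeros on `I`. -/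
def IsRationalOn (f : ℝ → ℝ) (p q : ℕ) (I : Set ℝ) : Prop :=
  ∃ P Q : Polynomial ℝ, P.natDegree ≤ p ∧ Q.natDegree ≤ q ∧
    (∀ x ∈ I, Q.eval x ≠ 0) ∧ ∀ x ∈ I, f x = P.eval x / Q.eval x

/-- Dot product of two lists of reals. -/
def listDot (u v : List ℝ) : ℝ := ((u.zip v).map fun p => p.1 * p.2).sum

/-- A neuron: an activation function, a vector of weights and a bias. -/
structure Neuron where
  σ : ℝ → ℝ
  a : List ℝ
  b : ℝ

/-- Output of a neuron given the previous layer `y`: `σ(aᵀy + b)`. -/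
def Neuron.eval (n : Neuron) (y : List ℝ) : ℝ := n.σ (listDot n.a y + n.b)

/-- A feed-forward neural network with input dimension `d`: a list of layers
followed by a linear read-out `x ↦ wᵀ y_M + c`. -/
structure NeuralNet (d : ℕ) where
  layers : List (List Neuron)
  w : List ℝ
  c : ℝ

/-- Evaluation of a neural network. -/
def NeuralNet.eval {d : ℕ} (N : NeuralNet d) (x : Fin d → ℝ) : ℝ :=
  listDot N.w (N.layers.foldl (fun y layer => layer.map (fun n => n.eval y)) (List.ofFn x)) + N.c

/-- The size of a neural network: total number of nodes. -/
def NeuralNet.size {d : ℕ} (N : NeuralNet d) : ℕ := (N.layers.map List.length).sum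

/-- The depth of a neural network: number of layers. -/
def NeuralNet.depth {d : ℕ} (N : NeuralNet d) : ℕ := N.layers.length

/-- A ReLU network: every activation function is `ReLU`. -/
def NeuralNet.IsReLU {d : ℕ} (N : NeuralNet d) : Prop :=
  ∀ layer ∈ N.layers, ∀ n ∈ layer, n.σ = ReLU

/-- A rational network: every activation function is a rational function. -/
def NeuralNet.IsRational {d : ℕ} (N : NeuralNet d) : Prop :=
  ∀ layer ∈ N.layers, ∀ n ∈ layer, ∃ p q : ℕ, IsRationalOn n.σ p q Set.univ


section AuxLemmas
open Polynomial Finset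

lemma abs_cast_sub_ge_one {i j : ℕ} (h : i ≠ j) : (1:ℝ) ≤ |(i:ℝ) - (j:ℝ)| := by
  have h1 : ((i:ℤ) - (j:ℤ)) ≠ 0 := by intro hc; apply h; omega
  have h2 : (1:ℤ) ≤ |(i:ℤ) - (j:ℤ)| := Int.one_le_abs h1
  have : ((1:ℤ):ℝ) ≤ (|(i:ℤ) - (j:ℤ)| : ℝ) := by exact_mod_cast h2
  simpa [Int.cast_abs] using this

lemma extrap (m : ℕ) (hm : 1 ≤ m) (P : ℝ[X]) (hP : P.natDegree ≤ m)
    (α ℓ L A t : ℝ) (hℓ : 0 < ℓ)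
    (hA : ∀ k : ℕ, k ≤ m → |P.eval (α + k * ℓ / m)| ≤ A)
    (ht : ∀ k : ℕ, k ≤ m → |t - (α + k * ℓ / m)| ≤ L) :
    |P.eval t| ≤ (m+1) * (m * L / ℓ)^m * A := by
  have hm0 : (0:ℝ) < m := by exact_mod_cast hm
  have hL0 : 0 ≤ L := le_trans (abs_nonneg _) (ht 0 (Nat.zero_le m))
  have hA0 : 0 ≤ A := le_trans (abs_nonneg _) (hA 0 (Nat.zero_le m))
  have hq0 : 0 ≤ m * L / ℓ := by positivity
  set v : ℕ → ℝ := fun k => α + k * ℓ / m with hv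
  have hinj : Set.InjOn v (Finset.range (m+1)) := by
    intro i _ j _ hij
    have h1 : (i:ℝ) * ℓ / m = (j:ℝ) * ℓ / m := by
      have := hij; simp only [hv] at this; linarith
    have h2 : (i:ℝ) = j := by
      rw [div_left_inj' (ne_of_gt hm0), mul_left_inj' (ne_of_gt hℓ)] at h1
      exact h1
    exact_mod_cast h2
  have hdeg : P.degree < (Finset.range (m+1)).card := by
    rw [Finset.card_range]
    exact lt_of_le_of_lt P.degree_le_natDegree (by exact_mod_cast Nat.lt_succ_of_le hP)
  have hPi := Lagrange.eq_interpolate hinj hdeg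
  have heval : P.eval t = ∑ i ∈ Finset.range (m+1),
      P.eval (v i) * (Lagrange.basis (Finset.range (m+1)) v i).eval t := by
    conv_lhs => rw [hPi]
    rw [Lagrange.interpolate_apply, eval_finset_sum]
    exact Finset.sum_congr rfl (fun i _ => by rw [eval_mul, eval_C])
  have hbasis : ∀ i ∈ Finset.range (m+1),
      |(Lagrange.basis (Finset.range (m+1)) v i).eval t| ≤ (m * L / ℓ)^m := by
    intro i hi
    have hile : i ≤ m := Nat.lt_succ_iff.mp (Finset.mem_range.mp hi)
    rw [Lagrange.basis, eval_prod, Finset.abs_prod]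
    have hcard : ((Finset.range (m+1)).erase i).card = m := by
      rw [Finset.card_erase_of_mem hi, Finset.card_range]
      omega
    have hbd : ∀ j ∈ (Finset.range (m+1)).erase i,
        |(Lagrange.basisDivisor (v i) (v j)).eval t| ≤ m * L / ℓ := by
      intro j hj
      have hji : j ≠ i := (Finset.mem_erase.mp hj).1
      have hjle : j ≤ m := Nat.lt_succ_iff.mp (Finset.mem_range.mp (Finset.mem_erase.mp hj).2)
      rw [Lagrange.basisDivisor, eval_mul, eval_C, eval_sub, eval_X, eval_C, abs_mul, abs_inv]
      have hvij : |v i - v j| = |(i:ℝ) - j| * (ℓ / m) := by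
        have hh : v i - v j = ((i:ℝ) - j) * (ℓ / m) := by simp only [hv]; ring
        rw [hh, abs_mul, abs_of_pos (div_pos hℓ hm0)]
      have hge : ℓ / m ≤ |v i - v j| := by
        rw [hvij]
        nth_rewrite 1 [← one_mul (ℓ/m)]
        exact mul_le_mul_of_nonneg_right (abs_cast_sub_ge_one (Ne.symm hji))
          (le_of_lt (div_pos hℓ hm0))
      have hne : (0:ℝ) < |v i - v j| := lt_of_lt_of_le (div_pos hℓ hm0) hge
      have h1 : |v i - v j|⁻¹ ≤ (ℓ / m)⁻¹ := by
        exact inv_anti₀ (div_pos hℓ hm0) hge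
      have h2 : |t - v j| ≤ L := ht j hjle
      calc |v i - v j|⁻¹ * |t - v j| ≤ (ℓ / m)⁻¹ * L :=
            mul_le_mul h1 h2 (abs_nonneg _) (le_of_lt (inv_pos.mpr (div_pos hℓ hm0)))
        _ = m * L / ℓ := by field_simp
    calc ∏ j ∈ (Finset.range (m+1)).erase i, |(Lagrange.basisDivisor (v i) (v j)).eval t|
        ≤ ∏ _j ∈ (Finset.range (m+1)).erase i, (m * L / ℓ) :=
          Finset.prod_le_prod (fun _ _ => abs_nonneg _) hbd
      _ = (m * L / ℓ)^m := by rw [Finset.prod_const, hcard]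
  calc |P.eval t| ≤ ∑ i ∈ Finset.range (m+1),
        |P.eval (v i) * (Lagrange.basis (Finset.range (m+1)) v i).eval t| := by
        rw [heval]; exact Finset.abs_sum_le_sum_abs _ _
    _ ≤ ∑ _i ∈ Finset.range (m+1), (m * L / ℓ)^m * A := by
        apply Finset.sum_le_sum
        intro i hi
        rw [abs_mul, mul_comm (|P.eval (v i)|)]
        exact mul_le_mul (hbasis i hi)
          (hA i (Nat.lt_succ_iff.mp (Finset.mem_range.mp hi))) (abs_nonneg _)
          (pow_nonneg hq0 m)
    _ = (m+1) * (m * L / ℓ)^m * A := by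
        rw [Finset.sum_const, Finset.card_range, nsmul_eq_mul]
        push_cast; ring

lemma key (E : ℕ) (hE : 1 ≤ E) (a b : ℝ[X])
    (hh : (a - Polynomial.X * b).natDegree ≤ E) (hbdeg : b.natDegree ≤ E)
    (hbpos : ∀ x ∈ Set.Icc (-1:ℝ) 1, 0 < b.eval x)
    (δ : ℝ) (hδ : δ ≤ 1/2)
    (happ : ∀ x ∈ Set.Icc (-1:ℝ) 1, |a.eval x - |x| * b.eval x| ≤ δ * b.eval x) :
    1/2 ≤ δ * (((E:ℝ)+1)^2 * (2*E)^E * (4*E)^E) := by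
  have hE0 : (0:ℝ) < E := by exact_mod_cast hE
  have h0mem : (0:ℝ) ∈ Set.Icc (-1:ℝ) 1 := by constructor <;> norm_num
  have hδ0 : 0 ≤ δ := by
    have h1 := happ 0 h0mem
    have h2 := hbpos 0 h0mem
    nlinarith [abs_nonneg (a.eval 0 - |(0:ℝ)| * b.eval 0)]
  -- nodes
  have hnode2mem : ∀ k : ℕ, k ≤ E → ((-1:ℝ) + k * (1/2) / E) ∈ Set.Icc (-1:ℝ) 1 := by
    intro k hk
    have hk' : (k:ℝ) ≤ E := by exact_mod_cast hk
    have h1 : 0 ≤ (k:ℝ) * (1/2) / E := by positivity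
    have h2 : (k:ℝ) * (1/2) / E ≤ 1/2 := by
      rw [div_le_iff₀ hE0]; nlinarith
    constructor <;> [linarith; linarith]
  have hnode2le : ∀ k : ℕ, k ≤ E → ((-1:ℝ) + k * (1/2) / E) ≤ -(1/2) := by
    intro k hk
    have hk' : (k:ℝ) ≤ E := by exact_mod_cast hk
    have h2 : (k:ℝ) * (1/2) / E ≤ 1/2 := by rw [div_le_iff₀ hE0]; nlinarith
    linarith
  have hnode1mem : ∀ k : ℕ, k ≤ E → ((0:ℝ) + k * 1 / E) ∈ Set.Icc (-1:ℝ) 1 := by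
    intro k hk
    have hk' : (k:ℝ) ≤ E := by exact_mod_cast hk
    have h1 : 0 ≤ (k:ℝ) * 1 / E := by positivity
    have h2 : (k:ℝ) * 1 / E ≤ 1 := by rw [div_le_iff₀ hE0]; nlinarith
    constructor <;> linarith
  -- max of b over nodes2
  obtain ⟨kstar, hkstar, hmax⟩ := Finset.exists_max_image (Finset.range (E+1))
      (fun k : ℕ => b.eval ((-1:ℝ) + k * (1/2) / E)) ⟨0, Finset.mem_range.mpr (Nat.succ_pos E)⟩
  set xs : ℝ := (-1:ℝ) + kstar * (1/2) / E with hxs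
  have hkstarle : kstar ≤ E := Nat.lt_succ_iff.mp (Finset.mem_range.mp hkstar)
  have hxsmem : xs ∈ Set.Icc (-1:ℝ) 1 := hnode2mem kstar hkstarle
  have hxsle : xs ≤ -(1/2) := hnode2le kstar hkstarle
  have hxs1 : -1 ≤ xs := hxsmem.1
  have hxs2 : xs ≤ 1 := hxsmem.2
  clear_value xs
  have hBpos : 0 < b.eval xs := hbpos xs hxsmem
  -- extrapolate b from nodes2 to nodes1
  have hbbound : ∀ j : ℕ, j ≤ E → b.eval ((0:ℝ) + j * 1 / E) ≤ ((E:ℝ)+1) * (4*E)^E * b.eval xs := by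
    intro j hj
    have := extrap E hE b hbdeg (-1) (1/2) 2 (b.eval xs) ((0:ℝ) + j * 1 / E) (by norm_num)
      (fun k hk => by
        rw [abs_of_pos (hbpos _ (hnode2mem k hk))]
        exact hmax k (Finset.mem_range.mpr (Nat.lt_succ_of_le hk)))
      (fun k hk => by
        have h1 := hnode2mem k hk
        have h2 := hnode1mem j hj
        rw [Set.mem_Icc] at h1 h2
        rw [abs_le]
        exact ⟨by linarith [h1.1, h1.2, h2.1, h2.2], by linarith [h1.1, h1.2, h2.1, h2.2]⟩)
    have hq : (E:ℝ) * 2 / (1/2) = 4*E := by ring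
    rw [hq] at this
    calc b.eval ((0:ℝ) + j * 1 / E) ≤ |b.eval ((0:ℝ) + j * 1 / E)| := le_abs_self _
      _ ≤ ((E:ℝ)+1) * (4*E)^E * b.eval xs := this
  -- bound h at nodes1
  set h : ℝ[X] := a - Polynomial.X * b with hhdef
  have hhnode : ∀ j : ℕ, j ≤ E → |h.eval ((0:ℝ) + j * 1 / E)| ≤ δ * (((E:ℝ)+1) * (4*E)^E * b.eval xs) := by
    intro j hj
    set x : ℝ := (0:ℝ) + j * 1 / E with hx
    have hxmem : x ∈ Set.Icc (-1:ℝ) 1 := hnode1mem j hj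
    have hx0 : 0 ≤ x := by
      have : (0:ℝ) ≤ (j:ℝ) * 1 / E := by positivity
      simpa [hx] using this
    have h1 : h.eval x = a.eval x - |x| * b.eval x := by
      simp [hhdef, abs_of_nonneg hx0]
    rw [h1]
    calc |a.eval x - |x| * b.eval x| ≤ δ * b.eval x := happ x hxmem
      _ ≤ δ * (((E:ℝ)+1) * (4*E)^E * b.eval xs) :=
        mul_le_mul_of_nonneg_left (hbbound j hj) hδ0
  -- extrapolate h to xs
  have hhxs : |h.eval xs| ≤ ((E:ℝ)+1) * (2*E)^E * (δ * (((E:ℝ)+1) * (4*E)^E * b.eval xs)) := by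
    have := extrap E hE h hh 0 1 2 (δ * (((E:ℝ)+1) * (4*E)^E * b.eval xs)) xs (by norm_num)
      hhnode
      (fun k hk => by
        have h1 := hnode1mem k hk
        rw [Set.mem_Icc] at h1
        rw [abs_le]
        exact ⟨by linarith [h1.1, h1.2, hxs1, hxs2],
               by linarith [h1.1, h1.2, hxs1, hxs2]⟩)
    have hq : (E:ℝ) * 2 / 1 = 2*E := by ring
    rwa [hq] at this
  -- lower bound on h at xs
  have hlow : (1/2) * b.eval xs ≤ |h.eval xs| := by
    have h1 := happ xs hxsmem
    have habs : |xs| = -xs := abs_of_neg (by linarith)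
    have h2 : h.eval xs = (a.eval xs - |xs| * b.eval xs) + (-2*xs) * b.eval xs := by
      simp [hhdef, habs]; ring
    have h3 : a.eval xs - |xs| * b.eval xs ≥ -(δ * b.eval xs) := neg_le_of_abs_le h1 |>.trans_eq rfl
    have h4 : (-2*xs) * b.eval xs ≥ 1 * b.eval xs := by
      apply mul_le_mul_of_nonneg_right _ (le_of_lt hBpos)
      linarith
    calc (1/2) * b.eval xs ≤ h.eval xs := by rw [h2]; nlinarith
      _ ≤ |h.eval xs| := le_abs_self _
  -- combine
  have hcomb : (1/2) * b.eval xs ≤ (δ * (((E:ℝ)+1)^2 * (2*E)^E * (4*E)^E)) * b.eval xs := by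
    calc (1/2) * b.eval xs ≤ |h.eval xs| := hlow
      _ ≤ ((E:ℝ)+1) * (2*E)^E * (δ * (((E:ℝ)+1) * (4*E)^E * b.eval xs)) := hhxs
      _ = (δ * (((E:ℝ)+1)^2 * (2*E)^E * (4*E)^E)) * b.eval xs := by ring
  exact le_of_mul_le_mul_right hcomb hBpos

-- q never vanishes ⇒ constant sign
lemma sign_const (q : ℝ[X]) (hq : ∀ x : ℝ, q.eval x ≠ 0) (x y : ℝ) :
    0 < q.eval x * q.eval y := by
  rcases lt_or_gt_of_ne (mul_ne_zero (hq x) (hq y)) with h | h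
  · exfalso
    have hcont : ContinuousOn (fun z => q.eval z) (Set.uIcc x y) :=
      (Polynomial.continuous q).continuousOn
    have h0 : (0:ℝ) ∈ Set.uIcc (q.eval x) (q.eval y) := by
      rcases mul_neg_iff.mp h with ⟨h1, h2⟩ | ⟨h1, h2⟩
      · exact Set.mem_uIcc.mpr (Or.inr ⟨le_of_lt h2, le_of_lt h1⟩)
      · exact Set.mem_uIcc.mpr (Or.inl ⟨le_of_lt h1, le_of_lt h2⟩)
    obtain ⟨z, _, hz⟩ := intermediate_value_uIcc hcont h0
    exact hq z hz
  · exact h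

/-- main reduction: a rational approx of ReLU of degree n on [-1,1] gives a lower bound. -/
lemma rat_lower (n : ℕ) (p q : ℝ[X]) (hp : p.natDegree ≤ n) (hqd : q.natDegree ≤ n)
    (hq : ∀ x : ℝ, q.eval x ≠ 0) (ε : ℝ) (hε : 0 < ε) (hε2 : ε ≤ 1/4)
    (happ : ∀ x ∈ Set.Icc (-1:ℝ) 1, |p.eval x / q.eval x - ReLU x| ≤ ε) :
    1/2 ≤ (2*ε) * (((2*(n:ℝ)+3))^2 * (2*(2*(n:ℝ)+2))^(2*n+2) * (4*(2*(n:ℝ)+2))^(2*n+2)) := by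
  set qm : ℝ[X] := q.comp (-Polynomial.X) with hqm
  set pm : ℝ[X] := p.comp (-Polynomial.X) with hpm
  have hqm_eval : ∀ x : ℝ, qm.eval x = q.eval (-x) := by
    intro x; simp [hqm, Polynomial.eval_comp]
  have hpm_eval : ∀ x : ℝ, pm.eval x = p.eval (-x) := by
    intro x; simp [hpm, Polynomial.eval_comp]
  set a : ℝ[X] := p * qm + pm * q with ha
  set b : ℝ[X] := q * qm with hb
  have hnegX : (-Polynomial.X : ℝ[X]).natDegree = 1 := by
    simpa using Polynomial.natDegree_X (R := ℝ)
  have hqmdeg : qm.natDegree ≤ n := by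
    rw [hqm, Polynomial.natDegree_comp, hnegX, mul_one]; exact hqd
  have hpmdeg : pm.natDegree ≤ n := by
    rw [hpm, Polynomial.natDegree_comp, hnegX, mul_one]; exact hp
  have hadeg : a.natDegree ≤ 2*n := by
    rw [ha]
    apply le_trans (Polynomial.natDegree_add_le _ _)
    apply max_le
    · exact le_trans (Polynomial.natDegree_mul_le) (by omega)
    · exact le_trans (Polynomial.natDegree_mul_le) (by omega)
  have hbdeg : b.natDegree ≤ 2*n := by
    rw [hb]; exact le_trans (Polynomial.natDegree_mul_le) (by omega)
  have hbpos : ∀ x ∈ Set.Icc (-1:ℝ) 1, 0 < b.eval x := by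
    intro x _
    rw [hb, Polynomial.eval_mul, hqm_eval]
    exact sign_const q hq x (-x)
  have happ2 : ∀ x ∈ Set.Icc (-1:ℝ) 1, |a.eval x - |x| * b.eval x| ≤ (2*ε) * b.eval x := by
    intro x hx
    have hxm : -x ∈ Set.Icc (-1:ℝ) 1 := by
      rw [Set.mem_Icc] at hx ⊢; constructor <;> linarith [hx.1, hx.2]
    have h1 := happ x hx
    have h2 := happ (-x) hxm
    have hqx := hq x
    have hqmx := hq (-x)
    -- p x = (ReLU x + e1) * q x
    set e1 : ℝ := p.eval x / q.eval x - ReLU x with he1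
    set e2 : ℝ := p.eval (-x) / q.eval (-x) - ReLU (-x) with he2
    have hp1 : p.eval x = (ReLU x + e1) * q.eval x := by
      rw [he1, add_sub_cancel, div_mul_cancel₀ _ hqx]
    have hp2 : p.eval (-x) = (ReLU (-x) + e2) * q.eval (-x) := by
      rw [he2, add_sub_cancel, div_mul_cancel₀ _ hqmx]
    have hrelu : ReLU x + ReLU (-x) = |x| := by
      rw [ReLU, ReLU]
      rcases le_or_gt 0 x with h | h
      · rw [max_eq_left h, max_eq_right (by linarith), abs_of_nonneg h]; ring
      · rw [max_eq_right (le_of_lt h), max_eq_left (by linarith), abs_of_neg h]; ring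
    have hkey : a.eval x - |x| * b.eval x = (e1 + e2) * b.eval x := by
      rw [ha, hb]
      simp only [Polynomial.eval_add, Polynomial.eval_mul, hqm_eval, hpm_eval]
      rw [hp1, hp2, ← hrelu]
      ring
    rw [hkey, abs_mul, abs_of_pos (hbpos x hx)]
    apply mul_le_mul_of_nonneg_right _ (le_of_lt (hbpos x hx))
    calc |e1 + e2| ≤ |e1| + |e2| := abs_add_le _ _
      _ ≤ 2*ε := by linarith
  -- apply key with E = 2n+2
  have hkeyres := key (2*n+2) (by omega) a b
    (by
      apply le_trans (Polynomial.natDegree_sub_le _ _)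
      apply max_le (by omega)
      exact le_trans (Polynomial.natDegree_mul_le) (by simpa using by omega))
    (by omega)
    hbpos (2*ε) (by linarith) happ2
  have hcast : ((2*n+2 : ℕ) : ℝ) = 2*(n:ℝ)+2 := by push_cast; ring
  rw [hcast] at hkeyres
  calc (1:ℝ)/2 ≤ (2*ε) * ((2*(n:ℝ)+2+1)^2 * (2*(2*(n:ℝ)+2))^(2*n+2) * (4*(2*(n:ℝ)+2))^(2*n+2)) := hkeyres
    _ = (2*ε) * (((2*(n:ℝ)+3))^2 * (2*(2*(n:ℝ)+2))^(2*n+2) * (4*(2*(n:ℝ)+2))^(2*n+2)) := by ring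

/-! ### poly dot products -/

noncomputable def polyDot (w : List ℝ) (us : List (Polynomial ℝ)) : Polynomial ℝ :=
  ((w.zip us).map fun p => Polynomial.C p.1 * p.2).sum

lemma polyDot_nil (w : List ℝ) : polyDot w [] = 0 := by
  simp [polyDot]

lemma polyDot_nil' (us : List (Polynomial ℝ)) : polyDot [] us = 0 := by
  simp [polyDot]

lemma polyDot_cons (a : ℝ) (w : List ℝ) (u : Polynomial ℝ) (us : List (Polynomial ℝ)) :
    polyDot (a :: w) (u :: us) = Polynomial.C a * u + polyDot w us := by
  simp [polyDot]

lemma listDot_nil (w : List ℝ) : listDot w [] = 0 := by simp [listDot]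
lemma listDot_nil' (l : List ℝ) : listDot [] l = 0 := by simp [listDot]
lemma listDot_cons (a : ℝ) (w : List ℝ) (u : ℝ) (l : List ℝ) :
    listDot (a :: w) (u :: l) = a * u + listDot w l := by simp [listDot]

lemma polyDot_eval (w : List ℝ) (us : List (Polynomial ℝ)) (x : ℝ) :
    (polyDot w us).eval x = listDot w (us.map (fun u => u.eval x)) := by
  induction w generalizing us with
  | nil => simp [polyDot_nil', listDot_nil']
  | cons a w ih =>
    cases us with
    | nil => simp [polyDot_nil, listDot_nil]
    | cons u us =>
      rw [List.map_cons, polyDot_cons, listDot_cons, Polynomial.eval_add,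
        Polynomial.eval_mul, Polynomial.eval_C, ih]

lemma polyDot_deg (w : List ℝ) (us : List (Polynomial ℝ)) (B : ℕ)
    (h : ∀ u ∈ us, u.natDegree ≤ B) : (polyDot w us).natDegree ≤ B := by
  induction w generalizing us with
  | nil => simp [polyDot_nil']
  | cons a w ih =>
    cases us with
    | nil => simp [polyDot_nil]
    | cons u us =>
      rw [polyDot_cons]
      apply le_trans (Polynomial.natDegree_add_le _ _)
      apply max_le
      · exact le_trans (Polynomial.natDegree_mul_le)
          (by simpa using h u (List.mem_cons_self))
      · exact ih us (fun u hu => h u (List.mem_cons_of_mem _ hu))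

lemma listDot_div (w l : List ℝ) (d : ℝ) :
    listDot w (l.map (fun r => r / d)) = listDot w l / d := by
  induction w generalizing l with
  | nil => simp [listDot_nil']
  | cons a w ih =>
    cases l with
    | nil => simp [listDot_nil]
    | cons u l =>
      rw [List.map_cons, listDot_cons, listDot_cons, ih, add_div, mul_div_assoc]

/-! ### composition numerators -/

noncomputable def compNum (P : Polynomial ℝ) (d : ℕ) (w v : Polynomial ℝ) : Polynomial ℝ :=
  ∑ k ∈ Finset.range (d+1), Polynomial.C (P.coeff k) * w^k * v^(d-k)

lemma compNum_deg (P : Polynomial ℝ) (d : ℕ) (w v : Polynomial ℝ) (D : ℕ)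
    (hw : w.natDegree ≤ D) (hv : v.natDegree ≤ D) :
    (compNum P d w v).natDegree ≤ d * D := by
  apply Polynomial.natDegree_sum_le_of_forall_le
  intro k hk
  have hkd : k ≤ d := Nat.lt_succ_iff.mp (Finset.mem_range.mp hk)
  calc (Polynomial.C (P.coeff k) * w^k * v^(d-k)).natDegree
      ≤ (Polynomial.C (P.coeff k) * w^k).natDegree + (v^(d-k)).natDegree :=
        Polynomial.natDegree_mul_le
    _ ≤ ((Polynomial.C (P.coeff k)).natDegree + (w^k).natDegree) + (v^(d-k)).natDegree :=
        Nat.add_le_add_right Polynomial.natDegree_mul_le _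
    _ ≤ (0 + k * D) + (d-k) * D := by
        apply Nat.add_le_add
        apply Nat.add_le_add
        · simp
        · exact le_trans (Polynomial.natDegree_pow_le)
            (Nat.mul_le_mul_left k hw)
        · exact le_trans (Polynomial.natDegree_pow_le)
            (Nat.mul_le_mul_left (d-k) hv)
    _ ≤ d * D := by
        rw [Nat.zero_add, ← Nat.add_mul]
        exact Nat.mul_le_mul_right D (by omega)

lemma compNum_eval (P : Polynomial ℝ) (d : ℕ) (hd : P.natDegree ≤ d)
    (w v : Polynomial ℝ) (x : ℝ) (hv : v.eval x ≠ 0) :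
    (compNum P d w v).eval x = v.eval x ^ d * P.eval (w.eval x / v.eval x) := by
  have hP : P.eval (w.eval x / v.eval x) =
      ∑ k ∈ Finset.range (d+1), P.coeff k * (w.eval x / v.eval x)^k :=
    Polynomial.eval_eq_sum_range' (Nat.lt_succ_of_le hd) _
  rw [hP, Finset.mul_sum, compNum, Polynomial.eval_finset_sum]
  apply Finset.sum_congr rfl
  intro k hk
  have hkd : k ≤ d := Nat.lt_succ_iff.mp (Finset.mem_range.mp hk)
  rw [Polynomial.eval_mul, Polynomial.eval_mul, Polynomial.eval_C,
    Polynomial.eval_pow, Polynomial.eval_pow, div_pow]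
  rw [show d = k + (d-k) by omega, pow_add, Nat.add_sub_cancel_left]
  field_simp

lemma deg_step (dr Dp r : ℕ) : dr*Dp + Dp*(dr+1)^r ≤ Dp*(dr+1)^(r+1) := by
  have h1 : 1 ≤ (dr+1)^r := Nat.one_le_pow _ _ (Nat.succ_pos dr)
  calc dr*Dp + Dp*(dr+1)^r ≤ dr*Dp*(dr+1)^r + Dp*(dr+1)^r := by
        exact Nat.add_le_add_right (Nat.le_mul_of_pos_right _ (by omega)) _
    _ = Dp*(dr+1)^(r+1) := by ring

lemma netStep (dr : ℕ) (layer : List Neuron)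
    (hlayer : ∀ nr ∈ layer, IsRationalOn nr.σ dr dr Set.univ)
    (us : List (Polynomial ℝ)) (v : Polynomial ℝ) (Dp : ℕ)
    (hv : ∀ x : ℝ, v.eval x ≠ 0) (hus : ∀ u ∈ us, u.natDegree ≤ Dp)
    (hvd : v.natDegree ≤ Dp) :
    ∃ (us' : List (Polynomial ℝ)) (v' : Polynomial ℝ),
      (∀ x : ℝ, v'.eval x ≠ 0) ∧
      (∀ u ∈ us', u.natDegree ≤ Dp * (dr+1)^layer.length) ∧
      v'.natDegree ≤ Dp * (dr+1)^layer.length ∧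
      ∀ x : ℝ, layer.map (fun nr => nr.eval (us.map (fun u => u.eval x / v.eval x)))
        = us'.map (fun u => u.eval x / v'.eval x) := by
  induction layer with
  | nil =>
    refine ⟨[], v, hv, by simp, by simpa using hvd, by simp⟩
  | cons nr rest ih =>
    obtain ⟨us₁, v₁, hv₁, hus₁, hv₁d, heq₁⟩ :=
      ih (fun m hm => hlayer m (List.mem_cons_of_mem _ hm))
    obtain ⟨P, Q, hPdeg, hQdeg, hQne, hσ⟩ := hlayer nr (List.mem_cons_self)
    set w : Polynomial ℝ := polyDot nr.a us + Polynomial.C nr.b * v with hwdef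
    have hwdeg : w.natDegree ≤ Dp := by
      apply le_trans (Polynomial.natDegree_add_le _ _)
      apply max_le (polyDot_deg _ _ _ hus)
      exact le_trans Polynomial.natDegree_mul_le (by simpa using hvd)
    set num : Polynomial ℝ := compNum P dr w v with hnum
    set den : Polynomial ℝ := compNum Q dr w v with hden
    have hdenne : ∀ x : ℝ, den.eval x ≠ 0 := by
      intro x
      rw [hden, compNum_eval Q dr hQdeg w v x (hv x)]
      exact mul_ne_zero (pow_ne_zero _ (hv x)) (hQne _ (Set.mem_univ _))
    have hneuron : ∀ x : ℝ,
        nr.eval (us.map (fun u => u.eval x / v.eval x)) = num.eval x / den.eval x := by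
      intro x
      rw [Neuron.eval]
      have harg : listDot nr.a (us.map (fun u => u.eval x / v.eval x)) + nr.b
          = w.eval x / v.eval x := by
        have h1 : (us.map (fun u => u.eval x / v.eval x))
            = (us.map (fun u => u.eval x)).map (fun r => r / v.eval x) := by
          rw [List.map_map]; rfl
        rw [h1, listDot_div, ← polyDot_eval]
        rw [hwdef, Polynomial.eval_add, Polynomial.eval_mul, Polynomial.eval_C,
          add_div, mul_div_cancel_right₀ _ (hv x)]
      rw [harg, hσ _ (Set.mem_univ _), hnum, hden,
        compNum_eval P dr hPdeg w v x (hv x), compNum_eval Q dr hQdeg w v x (hv x),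
        mul_div_mul_left _ _ (pow_ne_zero dr (hv x))]
    refine ⟨num * v₁ :: us₁.map (· * den), den * v₁, ?_, ?_, ?_, ?_⟩
    · intro x
      rw [Polynomial.eval_mul]
      exact mul_ne_zero (hdenne x) (hv₁ x)
    · intro u hu
      rcases List.mem_cons.mp hu with h | h
      · subst h
        apply le_trans Polynomial.natDegree_mul_le
        apply le_trans (Nat.add_le_add
          (compNum_deg P dr w v Dp hwdeg hvd) hv₁d)
        simpa using deg_step dr Dp rest.length
      · obtain ⟨u₁, hu₁, rfl⟩ := List.mem_map.mp h
        apply le_trans Polynomial.natDegree_mul_le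
        apply le_trans (Nat.add_le_add (hus₁ u₁ hu₁) (compNum_deg Q dr w v Dp hwdeg hvd))
        rw [Nat.add_comm]
        simpa using deg_step dr Dp rest.length
    · apply le_trans Polynomial.natDegree_mul_le
      apply le_trans (Nat.add_le_add (compNum_deg Q dr w v Dp hwdeg hvd) hv₁d)
      simpa using deg_step dr Dp rest.length
    · intro x
      rw [List.map_cons, List.map_cons, heq₁ x, hneuron x]
      congr 1
      · rw [Polynomial.eval_mul, Polynomial.eval_mul,
          mul_div_mul_right _ _ (hv₁ x)]
      · rw [List.map_map]
        apply List.map_congr_left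
        intro u hu
        show u.eval x / v₁.eval x = (u * den).eval x / ((den * v₁).eval x)
        rw [Polynomial.eval_mul, Polynomial.eval_mul, mul_comm (den.eval x) (v₁.eval x),
          mul_div_mul_right _ _ (hdenne x)]

lemma layers_rat (dr : ℕ) (layers : List (List Neuron))
    (hlayers : ∀ l ∈ layers, ∀ nr ∈ l, IsRationalOn nr.σ dr dr Set.univ)
    (us : List (Polynomial ℝ)) (v : Polynomial ℝ) (Dp : ℕ)
    (hv : ∀ x : ℝ, v.eval x ≠ 0) (hus : ∀ u ∈ us, u.natDegree ≤ Dp)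
    (hvd : v.natDegree ≤ Dp) :
    ∃ (us' : List (Polynomial ℝ)) (v' : Polynomial ℝ),
      (∀ x : ℝ, v'.eval x ≠ 0) ∧
      (∀ u ∈ us', u.natDegree ≤ Dp * (dr+1)^((layers.map List.length).sum)) ∧
      v'.natDegree ≤ Dp * (dr+1)^((layers.map List.length).sum) ∧
      ∀ x : ℝ, layers.foldl (fun y layer => layer.map (fun n => n.eval y))
          (us.map (fun u => u.eval x / v.eval x))
        = us'.map (fun u => u.eval x / v'.eval x) := by
  induction layers generalizing us v Dp with
  | nil => exact ⟨us, v, hv, by simpa using hus, by simpa using hvd, by simp⟩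
  | cons l rest ih =>
    obtain ⟨us₁, v₁, hv₁, hus₁, hv₁d, heq₁⟩ :=
      netStep dr l (hlayers l (List.mem_cons_self)) us v Dp hv hus hvd
    obtain ⟨us', v', hv', hus', hv'd, heq'⟩ :=
      ih (fun l' hl' => hlayers l' (List.mem_cons_of_mem _ hl')) us₁ v₁
        (Dp * (dr+1)^l.length) hv₁ hus₁ hv₁d
    have hexp : Dp * (dr+1)^l.length * (dr+1)^((rest.map List.length).sum)
        = Dp * (dr+1)^(((l :: rest).map List.length).sum) := by
      rw [List.map_cons, List.sum_cons, pow_add]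
      ring
    refine ⟨us', v', hv', ?_, ?_, ?_⟩
    · intro u hu; rw [← hexp]; exact hus' u hu
    · rw [← hexp]; exact hv'd
    · intro x
      rw [List.foldl_cons, heq₁ x, heq' x]

lemma net_rat (dr : ℕ) (R : NeuralNet 1)
    (hR : ∀ layer ∈ R.layers, ∀ nr ∈ layer, IsRationalOn nr.σ dr dr Set.univ) :
    ∃ p q : Polynomial ℝ, p.natDegree ≤ (dr+1)^R.size ∧ q.natDegree ≤ (dr+1)^R.size ∧
      (∀ x : ℝ, q.eval x ≠ 0) ∧ ∀ x : ℝ, R.eval (fun _ => x) = p.eval x / q.eval x := by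
  obtain ⟨us', v', hv', hus', hv'd, heq'⟩ :=
    layers_rat dr R.layers hR [Polynomial.X] 1 1 (by simp)
      (by intro u hu; simp at hu; simp [hu]) (by simp)
  rw [Nat.one_mul] at hus' hv'd
  refine ⟨polyDot R.w us' + Polynomial.C R.c * v', v', ?_, hv'd, hv', ?_⟩
  · apply le_trans (Polynomial.natDegree_add_le _ _)
    apply max_le (polyDot_deg _ _ _ hus')
    exact le_trans Polynomial.natDegree_mul_le (by simpa using hv'd)
  · intro x
    have hinit : (List.ofFn (fun _ : Fin 1 => x))
        = [Polynomial.X].map (fun u => u.eval x / (1 : Polynomial ℝ).eval x) := by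
      simp
    rw [NeuralNet.eval, hinit, heq' x]
    have h1 : us'.map (fun u => u.eval x / v'.eval x)
        = (us'.map (fun u => u.eval x)).map (fun r => r / v'.eval x) := by
      rw [List.map_map]; rfl
    rw [h1, listDot_div, ← polyDot_eval, Polynomial.eval_add, Polynomial.eval_mul,
      Polynomial.eval_C, add_div, mul_div_cancel_right₀ _ (hv' x)]

end AuxLemmas

set_option maxHeartbeats 1000000

/-- Lower bound: for fixed `d_r ≥ 2` there are `c > 0` and `0 < ε₀ < 1` such that any
rational network (activations of degree at most `d_r`) that `ε`-approximates `ReLU` on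
`[-1,1]`, for `0 < ε < ε₀`, has size at least `c·log(log(1/ε))`. -/
theorem rational_network_relu_lower_bound (dr : ℕ) (hdr : 2 ≤ dr) :
    ∃ c > (0 : ℝ), ∃ ε₀ : ℝ, 0 < ε₀ ∧ ε₀ < 1 ∧
      ∀ ε : ℝ, 0 < ε → ε < ε₀ →
        ∀ R : NeuralNet 1,
          (∀ layer ∈ R.layers, ∀ n ∈ layer, IsRationalOn n.σ dr dr Set.univ) →
          (∀ x ∈ Set.Icc (-1 : ℝ) 1, |R.eval (fun _ => x) - ReLU x| ≤ ε) →
          c * Real.log (Real.log (1 / ε)) ≤ (R.size : ℝ) := by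
  have hdr3 : (3:ℝ) ≤ (dr:ℝ) + 1 := by
    have : (2:ℝ) ≤ (dr:ℝ) := by exact_mod_cast hdr
    linarith
  set L : ℝ := Real.log ((dr:ℝ)+1) with hL
  have hLpos : 0 < L := Real.log_pos (by linarith)
  refine ⟨1/(6*L), by positivity, Real.exp (-(((dr:ℝ)+1)^14)), Real.exp_pos _, ?_, ?_⟩
  · have h0 : (0:ℝ) < ((dr:ℝ)+1)^14 := by positivity
    calc Real.exp (-(((dr:ℝ)+1)^14)) < Real.exp 0 := Real.exp_lt_exp.mpr (by linarith)
      _ = 1 := Real.exp_zero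
  intro ε hε hε₀ R hR happ
  -- the network is a rational function of degree ≤ n
  obtain ⟨p, q, hp, hq, hqne, heval⟩ := net_rat dr R hR
  set s : ℕ := R.size with hs
  set n : ℕ := (dr+1)^s with hn
  have hncast : (n:ℝ) = ((dr:ℝ)+1)^s := by push_cast [hn]; ring
  have hn1 : (1:ℝ) ≤ (n:ℝ) := by
    rw [hncast]; exact one_le_pow₀ (by linarith)
  -- ε is small
  have hεsmall : ε ≤ 1/4 := by
    have h14 : (2:ℝ) ≤ ((dr:ℝ)+1)^14 := by
      calc (2:ℝ) ≤ 3^14 := by norm_num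
        _ ≤ ((dr:ℝ)+1)^14 := pow_le_pow_left₀ (by norm_num) hdr3 14
    have h1 : Real.exp (-(((dr:ℝ)+1)^14)) ≤ Real.exp (-2) :=
      Real.exp_le_exp.mpr (by linarith)
    have h2 : Real.exp (-2:ℝ) < 1/4 := by
      have h4 : (4:ℝ) < Real.exp 2 := by
        have he : (2.7182818283:ℝ) < Real.exp 1 := Real.exp_one_gt_d9
        calc (4:ℝ) < 2.7182818283^2 := by norm_num
          _ < (Real.exp 1)^2 := by nlinarith
          _ = Real.exp 2 := by rw [← Real.exp_nat_mul]; norm_num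
      rw [Real.exp_neg]
      calc (Real.exp 2)⁻¹ < (4:ℝ)⁻¹ := by
            apply inv_strictAnti₀ (by norm_num) h4
        _ = 1/4 := by norm_num
    linarith
  -- apply rational lower bound
  have hmain := rat_lower n p q hp hq hqne ε hε hεsmall
    (fun x hx => by rw [← heval x]; exact happ x hx)
  -- derive 1/ε ≤ K^(2n+4)
  set K : ℝ := 8*(2*(n:ℝ)+3)^2 with hK
  have hKpos : (0:ℝ) < K := by positivity
  have hK4 : (4:ℝ) ≤ K := by nlinarith
  have hT : 1/ε ≤ K^(2*n+2+2) := by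
    have hTpos : (0:ℝ) < ((2*(n:ℝ)+3))^2 * (2*(2*(n:ℝ)+2))^(2*n+2) * (4*(2*(n:ℝ)+2))^(2*n+2) := by
      positivity
    have h1 : 1/ε ≤ 4 * (((2*(n:ℝ)+3))^2 * (2*(2*(n:ℝ)+2))^(2*n+2) * (4*(2*(n:ℝ)+2))^(2*n+2)) := by
      rw [div_le_iff₀ hε]
      nlinarith [hmain]
    have h2 : (2*(2*(n:ℝ)+2))^(2*n+2) * (4*(2*(n:ℝ)+2))^(2*n+2) ≤ K^(2*n+2) := by
      rw [← mul_pow]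
      apply pow_le_pow_left₀ (by positivity)
      nlinarith
    have h3 : 4 * ((2*(n:ℝ)+3))^2 ≤ K^2 := by nlinarith
    calc 1/ε ≤ 4 * (((2*(n:ℝ)+3))^2 * ((2*(2*(n:ℝ)+2))^(2*n+2) * (4*(2*(n:ℝ)+2))^(2*n+2))) := by
          calc 1/ε ≤ 4 * (((2*(n:ℝ)+3))^2 * (2*(2*(n:ℝ)+2))^(2*n+2) * (4*(2*(n:ℝ)+2))^(2*n+2)) := h1
            _ = 4 * (((2*(n:ℝ)+3))^2 * ((2*(2*(n:ℝ)+2))^(2*n+2) * (4*(2*(n:ℝ)+2))^(2*n+2))) := by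
                ring
      _ ≤ 4 * (((2*(n:ℝ)+3))^2 * K^(2*n+2)) := by
          apply mul_le_mul_of_nonneg_left _ (by norm_num)
          exact mul_le_mul_of_nonneg_left h2 (by positivity)
      _ = (4 * ((2*(n:ℝ)+3))^2) * K^(2*n+2) := by ring
      _ ≤ K^2 * K^(2*n+2) := mul_le_mul_of_nonneg_right h3 (by positivity)
      _ = K^(2*n+2+2) := by rw [← pow_add]; congr 1; omega
  -- log bound
  have hlog1 : Real.log (1/ε) ≤ ((dr:ℝ)+1)^(7+3*s) := by
    have h1 : Real.log (1/ε) ≤ (2*(n:ℝ)+4) * K := by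
      calc Real.log (1/ε) ≤ Real.log (K^(2*n+2+2)) :=
            Real.log_le_log (by positivity) hT
        _ = ((2*n+2+2:ℕ):ℝ) * Real.log K := by rw [Real.log_pow]
        _ ≤ ((2*n+2+2:ℕ):ℝ) * K := by
            apply mul_le_mul_of_nonneg_left (Real.log_le_self (le_of_lt hKpos))
            positivity
        _ = (2*(n:ℝ)+4) * K := by push_cast; ring
    have h2 : (2*(n:ℝ)+4) * K ≤ 2187 * (n:ℝ)^3 := by
      have e1 : (n:ℝ)^2 ≤ (n:ℝ)^3 := pow_le_pow_right₀ hn1 (by omega)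
      have e2 : (n:ℝ)^1 ≤ (n:ℝ)^3 := pow_le_pow_right₀ hn1 (by omega)
      have e3 : (n:ℝ) ≤ (n:ℝ)^3 := by simpa using e2
      have e4 : (1:ℝ) ≤ (n:ℝ)^3 := one_le_pow₀ hn1
      rw [hK]; nlinarith [e1, e3, e4]
    have h3 : (2187:ℝ) * (n:ℝ)^3 ≤ ((dr:ℝ)+1)^7 * (n:ℝ)^3 := by
      apply mul_le_mul_of_nonneg_right _ (by positivity)
      calc (2187:ℝ) = 3^7 := by norm_num
        _ ≤ ((dr:ℝ)+1)^7 := pow_le_pow_left₀ (by norm_num) hdr3 7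
    have h4 : ((dr:ℝ)+1)^7 * (n:ℝ)^3 = ((dr:ℝ)+1)^(7+3*s) := by
      rw [hncast, ← pow_mul, ← pow_add]
      congr 1
      omega
    linarith
  -- lower bound on log log
  have hlog2 : ((dr:ℝ)+1)^14 < Real.log (1/ε) := by
    have h1 : Real.exp (((dr:ℝ)+1)^14) < 1/ε := by
      rw [lt_div_iff₀ hε]
      calc Real.exp (((dr:ℝ)+1)^14) * ε < Real.exp (((dr:ℝ)+1)^14) * Real.exp (-(((dr:ℝ)+1)^14)) :=
            mul_lt_mul_of_pos_left hε₀ (Real.exp_pos _)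
        _ = 1 := by rw [← Real.exp_add]; simp
    calc ((dr:ℝ)+1)^14 = Real.log (Real.exp (((dr:ℝ)+1)^14)) := (Real.log_exp _).symm
      _ < Real.log (1/ε) := Real.log_lt_log (Real.exp_pos _) h1
  have hloglogpos : 0 < Real.log (1/ε) := lt_trans (by positivity) hlog2
  have hup : Real.log (Real.log (1/ε)) ≤ ((7:ℝ)+3*s) * L := by
    calc Real.log (Real.log (1/ε)) ≤ Real.log (((dr:ℝ)+1)^(7+3*s)) :=
          Real.log_le_log hloglogpos hlog1
      _ = ((7+3*s:ℕ):ℝ) * L := by rw [Real.log_pow]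
      _ = ((7:ℝ)+3*s) * L := by push_cast; ring
  have hdown : 14 * L < Real.log (Real.log (1/ε)) := by
    calc 14 * L = Real.log (((dr:ℝ)+1)^(14:ℕ)) := by rw [Real.log_pow]; push_cast; ring
      _ < Real.log (Real.log (1/ε)) := Real.log_lt_log (by positivity) hlog2
  -- conclude
  rw [div_mul_eq_mul_div, div_le_iff₀ (by positivity : (0:ℝ) < 6*L)]
  linarith [hup, hdown, hLpos]
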